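/- For all a, b ∈ 𝔤^♮ such that a is central in 𝔤^♮ (⁅a,x⁆ = 0 for all x ∈ 𤤮^♮): κ_𝔤(a,b) = 2·tr_{𝔤₁/₂}(ad(a)∘ad(b)). Consequently, if κ₀ is a 𝔤-invariant symmetric bilinear form on 𝔤 and k, h∨ ∈ ℂ satisfy κ_𝔤 = 2h∨·κ₀, then for a, b both in the centre of 𝔤^♮ the form κ^♮ := k·κ₀ + (1/2)·(κ_𝔤 − κ_{𝔤₀} − κ_{𝔤₁/₂}) satisfies κ^♮(a,b) = (k + h∨/2)·κ₀(a,b), where κ_{𝔤₀} and κ_{𝔤₁/₂} are the trace forms of the 𝔤^♮-modules 𝔤₀ and 𝔤₁/₂. -/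

import Mathlib

open Module LinearMap

/-- The eigenspace of `ad x` with eigenvalue `μ`; for the minimal grading given by an
sl₂-triple `(e,h,f)`, the graded piece `𝔤_j` is `adEigC h (2j)`. -/
def adEigC {g : Type*} [LieRing g] [LieAlgebra ℂ g] (x : g) (μ : ℂ) : Submodule ℂ g :=
  Module.End.eigenspace (LieAlgebra.ad ℂ g x) μ

/-- The trace of an endomorphism `f` restricted to an `f`-invariant subspace `W`. -/
noncomputable def traceOn {g : Type*} [AddCommGroup g] [Module ℂ g]
    (W : Submodule ℂ g) (f : g →ₗ[ℂ] g) (hf : ∀ x ∈ W, f x ∈ W) : ℂ :=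
  LinearMap.trace ℂ W (f.restrict hf)

section AuxKOCC

variable {g : Type*} [LieRing g] [LieAlgebra ℂ g] [FiniteDimensional ℂ g]

omit [FiniteDimensional ℂ g] in
lemma mem_adEigC_kocc {x y : g} {μ : ℂ} : y ∈ adEigC x μ ↔ ⁅x, y⁆ = μ • y := by
  rw [adEigC, Module.End.mem_eigenspace_iff]; rfl

omit [FiniteDimensional ℂ g] in
lemma lie_mem_adEigC_kocc {hh e : g} {ν μ : ℂ} (he : ⁅hh, e⁆ = ν • e) {x : g}
    (hx : x ∈ adEigC hh μ) {ρ : ℂ} (hρ : ρ = μ + ν) : ⁅e, x⁆ ∈ adEigC hh ρ := by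
  rw [mem_adEigC_kocc] at hx ⊢
  rw [leibniz_lie, he, hx, smul_lie, lie_smul, hρ, add_smul]
  abel

lemma prim_zero_kocc {e h f : g} (hne : h ≠ 0)
    (hhe : ⁅h, e⁆ = (2:ℂ) • e) (hhf : ⁅h, f⁆ = (-2:ℂ) • f) (hef : ⁅e, f⁆ = h)
    {μ : ℂ} (hμ : ∀ n : ℕ, μ ≠ n) {y : g} (hy : ⁅h, y⁆ = μ • y) (hey : ⁅e, y⁆ = 0) :
    y = 0 := by
  by_contra hy0
  have t : IsSl2Triple h e f :=
    ⟨hne, hef, by rw [hhe, ← Nat.cast_smul_eq_nsmul ℂ 2 e]; norm_num,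
      by rw [hhf, ← Nat.cast_smul_eq_nsmul ℂ 2 f, ← neg_smul]; norm_num⟩
  have P : t.HasPrimitiveVectorWith y μ := ⟨hy0, hy, hey⟩
  obtain ⟨n, hn⟩ := P.exists_nat
  exact hμ n hn

omit [FiniteDimensional ℂ g] in
lemma trace_restrict_zero_kocc (W : Submodule ℂ g)
    (F : g →ₗ[ℂ] g) (hf : ∀ x ∈ W, F x ∈ W) (h0 : ∀ x ∈ W, F x = 0) :
    LinearMap.trace ℂ W (F.restrict hf) = 0 := by
  have hz : F.restrict hf = 0 := by
    ext x
    simpa [LinearMap.restrict_coe_apply] using h0 x x.2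
  rw [hz, map_zero]

lemma not_nat_neg_one_kocc : ∀ n : ℕ, (-1 : ℂ) ≠ n := by
  intro n hn
  have h1 : ((-1:ℤ) : ℂ) = ((n:ℤ) : ℂ) := by push_cast; exact_mod_cast hn
  have := Int.cast_injective (α := ℂ) h1
  omega

lemma not_nat_neg_two_kocc : ∀ n : ℕ, (-2 : ℂ) ≠ n := by
  intro n hn
  have h1 : ((-2:ℤ) : ℂ) = ((n:ℤ) : ℂ) := by push_cast; exact_mod_cast hn
  have := Int.cast_injective (α := ℂ) h1
  omega


lemma trace_restrict_congr_kocc (V W : Submodule ℂ g) (T : g →ₗ[ℂ] g)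
    (hTV : ∀ x ∈ V, T x ∈ V) (hTW : ∀ x ∈ W, T x ∈ W)
    (E' F' : g →ₗ[ℂ] g) (hEVW : ∀ x ∈ V, E' x ∈ W) (hFWV : ∀ x ∈ W, F' x ∈ V)
    (hinjE : ∀ x ∈ V, E' x = 0 → x = 0) (hinjF : ∀ x ∈ W, F' x = 0 → x = 0)
    (hcomm : ∀ x : g, E' (T x) = T (E' x)) :
    LinearMap.trace ℂ V (T.restrict hTV) = LinearMap.trace ℂ W (T.restrict hTW) := by
  set E : V →ₗ[ℂ] W := E'.restrict hEVW with hE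
  set F : W →ₗ[ℂ] V := F'.restrict hFWV with hF
  have hEinj : Function.Injective E := by
    rw [injective_iff_map_eq_zero]
    intro z hz
    have hz' : E' (z : g) = 0 := by
      have := congrArg (Subtype.val) hz
      simpa [hE, LinearMap.restrict_coe_apply] using this
    exact Subtype.ext (hinjE _ z.2 hz')
  have hFinj : Function.Injective F := by
    rw [injective_iff_map_eq_zero]
    intro z hz
    have hz' : F' (z : g) = 0 := by
      have := congrArg (Subtype.val) hz
      simpa [hF, LinearMap.restrict_coe_apply] using this
    exact Subtype.ext (hinjF _ z.2 hz')
  have hdim : finrank ℂ V = finrank ℂ W :=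
    le_antisymm (LinearMap.finrank_le_finrank_of_injective hEinj)
      (LinearMap.finrank_le_finrank_of_injective hFinj)
  set φ : V ≃ₗ[ℂ] W := E.linearEquivOfInjective hEinj hdim with hφ
  have hφcoe : ∀ z : V, (φ z : g) = E' (z : g) := fun z => rfl
  have hconj : φ.conj (T.restrict hTV) = T.restrict hTW := by
    have key : ∀ x : V, φ ((T.restrict hTV) x) = (T.restrict hTW) (φ x) := by
      intro x
      apply Subtype.ext
      rw [hφcoe, LinearMap.restrict_coe_apply, LinearMap.restrict_coe_apply, hφcoe]
      exact hcomm (x : g)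
    ext y
    rw [LinearEquiv.conj_apply]
    have h2 := congrArg Subtype.val (key (φ.symm y))
    rw [LinearEquiv.apply_symm_apply] at h2
    rw [LinearMap.restrict_coe_apply] at h2
    exact h2
  rw [← hconj]
  exact (LinearMap.trace_conj' _ φ).symm

/-- Main computation: the killing form equals twice the trace on `adEigC h 1`. -/
lemma killing_eq_two_mul_trace_kocc
    [LieAlgebra.IsSemisimple ℂ g]
    (e h f : g) (hne : h ≠ 0)
    (hhe : ⁅h, e⁆ = (2 : ℂ) • e) (hhf : ⁅h, f⁆ = (-2 : ℂ) • f) (hef : ⁅e, f⁆ = h)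
    (hdiag : adEigC h (-2) ⊔ adEigC h (-1) ⊔ adEigC h 0 ⊔ adEigC h 1 ⊔ adEigC h 2 = ⊤)
    (hmin : adEigC h 2 = Submodule.span ℂ {e})
    (hstab : ∀ a : g, ⁅h, a⁆ = 0 → ∀ μ : ℂ, ∀ x ∈ adEigC h μ, ⁅a, x⁆ ∈ adEigC h μ)
    (a b : g)
    (hae : ⁅e, a⁆ = 0) (hah : ⁅h, a⁆ = 0) (haf : ⁅f, a⁆ = 0)
    (hbe : ⁅e, b⁆ = 0) (hbh : ⁅h, b⁆ = 0) (hbf : ⁅f, b⁆ = 0)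
    (hacent : ∀ x : g, ⁅e, x⁆ = 0 → ⁅h, x⁆ = 0 → ⁅f, x⁆ = 0 → ⁅a, x⁆ = 0)
    (hf0 : ∀ x ∈ adEigC h 0, ((LieAlgebra.ad ℂ g a) ∘ₗ (LieAlgebra.ad ℂ g b)) x
      ∈ adEigC h 0)
    (hf1 : ∀ x ∈ adEigC h 1, ((LieAlgebra.ad ℂ g a) ∘ₗ (LieAlgebra.ad ℂ g b)) x
      ∈ adEigC h 1) :
    killingForm ℂ g a b
      = 2 * traceOn (adEigC h 1) ((LieAlgebra.ad ℂ g a) ∘ₗ (LieAlgebra.ad ℂ g b)) hf1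
    ∧ traceOn (adEigC h 0) ((LieAlgebra.ad ℂ g a) ∘ₗ (LieAlgebra.ad ℂ g b)) hf0 = 0 := by
  have hah' : ⁅a, h⁆ = 0 := by rw [← lie_skew, hah, neg_zero]
  set A : g →ₗ[ℂ] g := (LieAlgebra.ad ℂ g a) ∘ₗ (LieAlgebra.ad ℂ g b) with hA
  have hAapp : ∀ x : g, A x = ⁅a, ⁅b, x⁆⁆ := fun x => rfl
  -- a kills the 0-eigenspace
  have keyA : ∀ x ∈ adEigC h 0, ⁅a, x⁆ = 0 := by
    intro x hx
    have hx0 : ⁅h, x⁆ = 0 := by simpa using mem_adEigC_kocc.mp hx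
    have hex : ⁅e, x⁆ ∈ adEigC h 2 := lie_mem_adEigC_kocc hhe hx (by norm_num)
    rw [hmin] at hex
    obtain ⟨c, hc⟩ := Submodule.mem_span_singleton.mp hex
    have heh : ⁅e, h⁆ = -((2:ℂ) • e) := by rw [← lie_skew, hhe]
    have hex' : ⁅e, x + (c/2) • h⁆ = 0 := by
      rw [lie_add, lie_smul, heh, ← hc]
      module
    have hhx' : ⁅h, x + (c/2) • h⁆ = 0 := by
      rw [lie_add, lie_smul, lie_self, smul_zero, hx0, add_zero]
    have hfx' : ⁅f, x + (c/2) • h⁆ = 0 := by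
      apply prim_zero_kocc hne hhe hhf hef not_nat_neg_two_kocc
      · rw [leibniz_lie, hhf, smul_lie, hhx', lie_zero, add_zero]
      · rw [leibniz_lie, hef, hhx', hex', lie_zero, add_zero]
    have hax' : ⁅a, x + (c/2) • h⁆ = 0 := hacent _ hex' hhx' hfx'
    have hsplit : ⁅a, x⁆ = ⁅a, x + (c/2) • h⁆ - (c/2) • ⁅a, h⁆ := by
      rw [lie_add, lie_smul]; abel
    rw [hsplit, hax', hah', smul_zero, sub_zero]
  -- a kills the (-2)-eigenspace
  have keyB : ∀ y ∈ adEigC h (-2), ⁅a, y⁆ = 0 := by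
    intro y hy
    have h2 : ⁅e, y⁆ ∈ adEigC h 0 := lie_mem_adEigC_kocc hhe hy (by norm_num)
    apply prim_zero_kocc hne hhe hhf hef not_nat_neg_two_kocc
    · exact mem_adEigC_kocc.mp (hstab a hah (-2) y hy)
    · rw [leibniz_lie, hae, zero_lie, zero_add]
      exact keyA _ h2
  have hbe' : ⁅b, e⁆ = 0 := by rw [← lie_skew, hbe, neg_zero]
  -- A vanishes on eigenspaces -2, 0, 2
  have hAm2 : ∀ x ∈ adEigC h (-2), A x = 0 := fun x hx => keyB _ (hstab b hbh _ x hx)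
  have hA0 : ∀ x ∈ adEigC h 0, A x = 0 := fun x hx => keyA _ (hstab b hbh 0 x hx)
  have hA2 : ∀ x ∈ adEigC h 2, A x = 0 := by
    intro x hx
    rw [hmin] at hx
    obtain ⟨c, hc⟩ := Submodule.mem_span_singleton.mp hx
    rw [hAapp, ← hc, lie_smul, hbe', smul_zero, lie_zero]
  -- decomposition of g
  have χinj : Function.Injective (![(-2:ℂ), -1, 0, 1, 2]) := by
    have hval : ∀ i : Fin 5, (![(-2:ℂ), -1, 0, 1, 2]) i = (i.val : ℂ) - 2 := by
      intro i; fin_cases i <;> norm_num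
    intro i j hij
    rw [hval, hval, sub_left_inj, Nat.cast_inj] at hij
    exact Fin.ext hij
  have hInd : iSupIndep (fun i => adEigC h ((![(-2:ℂ), -1, 0, 1, 2]) i)) :=
    (Module.End.eigenspaces_iSupIndep (LieAlgebra.ad ℂ g h)).comp χinj
  have hTop : ⨆ i, adEigC h ((![(-2:ℂ), -1, 0, 1, 2]) i) = ⊤ := by
    rw [eq_top_iff, ← hdiag]
    refine sup_le (sup_le (sup_le (sup_le ?_ ?_) ?_) ?_) ?_
    · exact le_iSup (fun i => adEigC h ((![(-2:ℂ), -1, 0, 1, 2]) i)) 0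
    · exact le_iSup (fun i => adEigC h ((![(-2:ℂ), -1, 0, 1, 2]) i)) 1
    · exact le_iSup (fun i => adEigC h ((![(-2:ℂ), -1, 0, 1, 2]) i)) 2
    · exact le_iSup (fun i => adEigC h ((![(-2:ℂ), -1, 0, 1, 2]) i)) 3
    · exact le_iSup (fun i => adEigC h ((![(-2:ℂ), -1, 0, 1, 2]) i)) 4
  have hInternal : DirectSum.IsInternal (fun i => adEigC h ((![(-2:ℂ), -1, 0, 1, 2]) i)) :=
    DirectSum.isInternal_submodule_of_iSupIndep_of_iSup_eq_top hInd hTop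
  have hMaps : ∀ i : Fin 5,
      Set.MapsTo A (adEigC h ((![(-2:ℂ), -1, 0, 1, 2]) i)) (adEigC h ((![(-2:ℂ), -1, 0, 1, 2]) i)) :=
    fun i x hx => hstab a hah _ _ (hstab b hbh _ _ hx)
  have htr : LinearMap.trace ℂ g A
      = ∑ i : Fin 5, LinearMap.trace ℂ (adEigC h ((![(-2:ℂ), -1, 0, 1, 2]) i))
          (A.restrict (hMaps i)) :=
    LinearMap.trace_eq_sum_trace_restrict hInternal hMaps
  rw [Fin.sum_univ_five] at htr
  have t0 : LinearMap.trace ℂ (adEigC h ((![(-2:ℂ), -1, 0, 1, 2]) 0)) (A.restrict (hMaps 0)) = 0 :=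
    trace_restrict_zero_kocc _ _ _ hAm2
  have t2 : LinearMap.trace ℂ (adEigC h ((![(-2:ℂ), -1, 0, 1, 2]) 2)) (A.restrict (hMaps 2)) = 0 :=
    trace_restrict_zero_kocc _ _ _ hA0
  have t4 : LinearMap.trace ℂ (adEigC h ((![(-2:ℂ), -1, 0, 1, 2]) 4)) (A.restrict (hMaps 4)) = 0 :=
    trace_restrict_zero_kocc _ _ _ hA2
  -- the equivariant isomorphism between eigenspaces -1 and 1
  have hEmem : ∀ x ∈ adEigC h (-1), (LieAlgebra.ad ℂ g e) x ∈ adEigC h 1 :=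
    fun x hx => lie_mem_adEigC_kocc hhe hx (by norm_num)
  have hFmem : ∀ x ∈ adEigC h 1, (LieAlgebra.ad ℂ g f) x ∈ adEigC h (-1) :=
    fun x hx => lie_mem_adEigC_kocc hhf hx (by norm_num)
  have hEinj0 : ∀ x ∈ adEigC h (-1), (LieAlgebra.ad ℂ g e) x = 0 → x = 0 := by
    intro x hx hx0
    exact prim_zero_kocc hne hhe hhf hef not_nat_neg_one_kocc (mem_adEigC_kocc.mp hx) hx0
  have hFinj0 : ∀ x ∈ adEigC h 1, (LieAlgebra.ad ℂ g f) x = 0 → x = 0 := by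
    intro x hx hx0
    have hne' : (-h : g) ≠ 0 := neg_ne_zero.mpr hne
    have hhe' : ⁅(-h : g), f⁆ = (2:ℂ) • f := by rw [neg_lie, hhf]; module
    have hhf' : ⁅(-h : g), e⁆ = (-2:ℂ) • e := by rw [neg_lie, hhe]; module
    have hef' : ⁅f, e⁆ = -h := by rw [← lie_skew, hef]
    have hhz : ⁅(-h : g), x⁆ = (-1:ℂ) • x := by rw [neg_lie, mem_adEigC_kocc.mp hx]; module
    exact prim_zero_kocc hne' hhe' hhf' hef' not_nat_neg_one_kocc hhz hx0
  have hcomm : ∀ x : g, (LieAlgebra.ad ℂ g e) (A x) = A ((LieAlgebra.ad ℂ g e) x) := by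
    intro x
    have comm : ∀ c m : g, ⁅e, c⁆ = 0 → ⁅e, ⁅c, m⁆⁆ = ⁅c, ⁅e, m⁆⁆ := by
      intro c m hc; rw [leibniz_lie, hc, zero_lie, zero_add]
    show ⁅e, A x⁆ = A ⁅e, x⁆
    rw [hAapp, hAapp, comm a _ hae, comm b _ hbe]
  have t13 : LinearMap.trace ℂ (adEigC h ((![(-2:ℂ), -1, 0, 1, 2]) 1)) (A.restrict (hMaps 1))
      = LinearMap.trace ℂ (adEigC h ((![(-2:ℂ), -1, 0, 1, 2]) 3)) (A.restrict (hMaps 3)) :=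
    trace_restrict_congr_kocc (adEigC h (-1)) (adEigC h 1) A (hMaps 1) (hMaps 3)
      (LieAlgebra.ad ℂ g e) (LieAlgebra.ad ℂ g f) hEmem hFmem hEinj0 hFinj0 hcomm
  have hKill : killingForm ℂ g a b = LinearMap.trace ℂ g A := LieModule.traceForm_apply_apply ℂ g g a b
  have hT1 : traceOn (adEigC h 1) A hf1
      = LinearMap.trace ℂ (adEigC h ((![(-2:ℂ), -1, 0, 1, 2]) 3)) (A.restrict (hMaps 3)) := rfl
  have hT0 : traceOn (adEigC h 0) A hf0 = 0 := trace_restrict_zero_kocc _ _ _ hA0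
  refine ⟨?_, hT0⟩
  rw [hKill, htr, t0, t2, t4, t13, hT1]
  ring

end AuxKOCC
/-- for `a, b ∈ 𝔤^♮` with `a` central in `𝔤^♮`,
`κ_𝔤(a,b) = 2·tr_{𝔤₁/₂}(ad a ∘ ad b)`; consequently, if `κ_𝔤 = 2h∨·κ₀` with `κ₀` invariant
symmetric, then for `a, b` both central in `𝔤^♮`,
`κ^♮(a,b) = k·κ₀(a,b) + (1/2)·(κ_𝔤 − κ_{𝔤₀} − κ_{𝔤₁/₂})(a,b) = (k + h∨/2)·κ₀(a,b)`. -/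
theorem killingForm_on_center_of_centralizer
    (g : Type*) [LieRing g] [LieAlgebra ℂ g] [FiniteDimensional ℂ g]
    [LieAlgebra.IsSemisimple ℂ g]
    (e h f : g)
    (hhe : ⁅h, e⁆ = (2 : ℂ) • e) (hhf : ⁅h, f⁆ = (-2 : ℂ) • f) (hef : ⁅e, f⁆ = h)
    (hdiag : adEigC h (-2) ⊔ adEigC h (-1) ⊔ adEigC h 0 ⊔ adEigC h 1 ⊔ adEigC h 2 = ⊤)
    (hmin : adEigC h 2 = Submodule.span ℂ {e})
    (hstab : ∀ a : g, ⁅h, a⁆ = 0 → ∀ μ : ℂ, ∀ x ∈ adEigC h μ, ⁅a, x⁆ ∈ adEigC h μ)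
    (a b : g)
    (hae : ⁅e, a⁆ = 0) (hah : ⁅h, a⁆ = 0) (haf : ⁅f, a⁆ = 0)
    (hbe : ⁅e, b⁆ = 0) (hbh : ⁅h, b⁆ = 0) (hbf : ⁅f, b⁆ = 0)
    (hacent : ∀ x : g, ⁅e, x⁆ = 0 → ⁅h, x⁆ = 0 → ⁅f, x⁆ = 0 → ⁅a, x⁆ = 0) :
    killingForm ℂ g a b
      = 2 * traceOn (adEigC h 1) ((LieAlgebra.ad ℂ g a) ∘ₗ (LieAlgebra.ad ℂ g b))
          (fun x hx => hstab a hah 1 _ (hstab b hbh 1 x hx))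
    ∧ ∀ (κ₀ : LinearMap.BilinForm ℂ g),
        (∀ x y : g, κ₀ x y = κ₀ y x) →
        (∀ c x y : g, κ₀ ⁅c, x⁆ y + κ₀ x ⁅c, y⁆ = 0) →
        ∀ k hV : ℂ, (∀ x y : g, killingForm ℂ g x y = 2 * hV * κ₀ x y) →
        (∀ x : g, ⁅e, x⁆ = 0 → ⁅h, x⁆ = 0 → ⁅f, x⁆ = 0 → ⁅b, x⁆ = 0) →
          k * κ₀ a b + (1 / 2) * (killingForm ℂ g a b
              - traceOn (adEigC h 0) ((LieAlgebra.ad ℂ g a) ∘ₗ (LieAlgebra.ad ℂ g b))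
                  (fun x hx => hstab a hah 0 _ (hstab b hbh 0 x hx))
              - traceOn (adEigC h 1) ((LieAlgebra.ad ℂ g a) ∘ₗ (LieAlgebra.ad ℂ g b))
                  (fun x hx => hstab a hah 1 _ (hstab b hbh 1 x hx)))
            = (k + hV / 2) * κ₀ a b := by
  rcases eq_or_ne h 0 with hne | hne
  · -- degenerate case: h = 0 forces e = f = 0 and then a = 0 by semisimplicity
    have he0 : e = 0 := by
      have h2 : (2:ℂ) • e = 0 := by rw [← hhe, hne, zero_lie]
      exact (smul_eq_zero.mp h2).resolve_left two_ne_zero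
    have hf0 : f = 0 := by
      have h2 : (-2:ℂ) • f = 0 := by rw [← hhf, hne, zero_lie]
      exact (smul_eq_zero.mp h2).resolve_left (by norm_num)
    have ha0 : a = 0 := by
      have hc : a ∈ LieAlgebra.center ℂ g := by
        refine (LieModule.mem_maxTrivSubmodule ℂ g g a).mpr fun x => ?_
        have hax := hacent x (by rw [he0, zero_lie]) (by rw [hne, zero_lie])
          (by rw [hf0, zero_lie])
        rw [← lie_skew, hax, neg_zero]
      rw [LieAlgebra.center_eq_bot ℂ g] at hc
      exact (LieSubmodule.mem_bot (R := ℂ) (L := g) a).mp hc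
    have hA0 : ∀ x : g, ((LieAlgebra.ad ℂ g a) ∘ₗ (LieAlgebra.ad ℂ g b)) x = 0 := by
      intro x
      show ⁅a, ⁅b, x⁆⁆ = 0
      rw [ha0, zero_lie]
    have hK0 : killingForm ℂ g a b = 0 := by rw [ha0]; simp
    have tr0 : traceOn (adEigC h 0) ((LieAlgebra.ad ℂ g a) ∘ₗ (LieAlgebra.ad ℂ g b))
        (fun x hx => hstab a hah 0 _ (hstab b hbh 0 x hx)) = 0 :=
      trace_restrict_zero_kocc _ _ _ (fun x _ => hA0 x)
    have tr1 : traceOn (adEigC h 1) ((LieAlgebra.ad ℂ g a) ∘ₗ (LieAlgebra.ad ℂ g b))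
        (fun x hx => hstab a hah 1 _ (hstab b hbh 1 x hx)) = 0 :=
      trace_restrict_zero_kocc _ _ _ (fun x _ => hA0 x)
    refine ⟨by rw [hK0, tr1]; ring, ?_⟩
    intro κ₀ _ _ k hV _ _
    have hκ : κ₀ a b = 0 := by rw [ha0]; simp
    rw [hκ, hK0, tr0, tr1]
    ring
  · have key := killing_eq_two_mul_trace_kocc e h f hne hhe hhf hef hdiag hmin hstab a b
      hae hah haf hbe hbh hbf hacent
      (fun x hx => hstab a hah 0 _ (hstab b hbh 0 x hx))
      (fun x hx => hstab a hah 1 _ (hstab b hbh 1 x hx))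
    refine ⟨key.1, ?_⟩
    intro κ₀ _ _ k hV hkap _
    have hK : killingForm ℂ g a b = 2 * hV * κ₀ a b := hkap a b
    have hT1 : traceOn (adEigC h 1) ((LieAlgebra.ad ℂ g a) ∘ₗ (LieAlgebra.ad ℂ g b))
        (fun x hx => hstab a hah 1 _ (hstab b hbh 1 x hx)) = hV * κ₀ a b := by
      have h2 : (2:ℂ) * traceOn (adEigC h 1) ((LieAlgebra.ad ℂ g a) ∘ₗ (LieAlgebra.ad ℂ g b))
          (fun x hx => hstab a hah 1 _ (hstab b hbh 1 x hx)) = 2 * (hV * κ₀ a b) := by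
        rw [← key.1, hK]; ring
      exact mul_left_cancel₀ two_ne_zero h2
    rw [key.2, hT1, hK]
    ring
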